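/- Let L be a field with a surjective discrete valuation ν : L* → ℤ, with valuation ring O_L, residue field l, and let K ⊆ L be a subfield with ν(K*) = ℤ, with residue field k. Then trdeg_k(l) ≤ trdeg_K(L). -/

import Mathlib

open Polynomial Cardinal
set_option maxHeartbeats 1000000

section Transfer

variable {E : Type*} [Field E]

/-- Building algebraicity from a polynomial over `E` with coefficients in the image. -/
theorem isAlgebraic_of_polyE {R : Type*} [CommRing R] [Algebra R E] {x : E} (Q : E[X])
    (hQ : Q ≠ 0) (hmem : ∀ i, Q.coeff i ∈ Set.range (algebraMap R E))
    (hev : Polynomial.eval x Q = 0) : IsAlgebraic R x := by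
  choose c hc using hmem
  refine ⟨∑ i ∈ Q.support, Polynomial.monomial i (c i), ?_, ?_⟩
  · have hmap : Polynomial.map (algebraMap R E) (∑ i ∈ Q.support, Polynomial.monomial i (c i))
        = Q := by
      rw [Polynomial.map_sum]
      simp_rw [Polynomial.map_monomial, hc]
      exact (Polynomial.as_sum_support Q).symm
    intro h
    rw [h, Polynomial.map_zero] at hmap
    exact hQ hmap.symm
  · rw [Polynomial.aeval_def, Polynomial.eval₂_eq_eval_map, Polynomial.map_sum]
    simp_rw [Polynomial.map_monomial, hc]
    rw [← Polynomial.as_sum_support Q]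
    exact hev

/-- Extracting a polynomial over `E` with coefficients in the image from algebraicity. -/
theorem exists_polyE_of_isAlgebraic {R : Type*} [CommRing R] [Algebra R E]
    (hinj : Function.Injective (algebraMap R E)) {x : E} (h : IsAlgebraic R x) :
    ∃ Q : E[X], Q ≠ 0 ∧ (∀ i, Q.coeff i ∈ Set.range (algebraMap R E)) ∧
      Polynomial.eval x Q = 0 := by
  obtain ⟨p, hp, hev⟩ := h
  refine ⟨p.map (algebraMap R E), ?_, ?_, ?_⟩
  · exact (Polynomial.map_ne_zero_iff hinj).2 hp
  · intro i; rw [Polynomial.coeff_map]; exact ⟨p.coeff i, rfl⟩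
  · rwa [Polynomial.eval_map, ← Polynomial.aeval_def]

/-- Master transfer lemma for algebraicity between two bases inside `E`. -/
theorem IsAlgebraic.transfer {R S : Type*} [CommRing R] [CommRing S] [Algebra R E] [Algebra S E]
    (hinj : Function.Injective (algebraMap R E))
    (h : Set.range (algebraMap R E) ⊆ Set.range (algebraMap S E)) {x : E}
    (hx : IsAlgebraic R x) : IsAlgebraic S x := by
  obtain ⟨Q, h1, h2, h3⟩ := exists_polyE_of_isAlgebraic hinj hx
  exact isAlgebraic_of_polyE Q h1 (fun i => h (h2 i)) h3

theorem Transcendental.transfer {R S : Type*} [CommRing R] [CommRing S] [Algebra R E]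
    [Algebra S E] (hinj : Function.Injective (algebraMap S E))
    (h : Set.range (algebraMap S E) ⊆ Set.range (algebraMap R E)) {x : E}
    (hx : Transcendental R x) : Transcendental S x :=
  fun ha => hx (ha.transfer hinj h)

@[simp]
theorem IntermediateField.range_algebraMap_val {K : Type*} [Field K] [Algebra K E]
    (N : IntermediateField K E) : Set.range (algebraMap ↥N E) = (N : Set E) := by
  ext y
  constructor
  · rintro ⟨z, rfl⟩; exact z.2
  · intro hy; exact ⟨⟨y, hy⟩, rfl⟩

theorem Subalgebra.range_algebraMap_val' {K : Type*} [CommSemiring K] [Algebra K E]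
    (N : Subalgebra K E) : Set.range (algebraMap ↥N E) = (N : Set E) := by
  ext y
  constructor
  · rintro ⟨z, rfl⟩; exact z.2
  · intro hy; exact ⟨⟨y, hy⟩, rfl⟩

theorem Subalgebra.algebraMap_val_injective {K : Type*} [CommSemiring K] [Algebra K E]
    (N : Subalgebra K E) : Function.Injective (algebraMap ↥N E) := by
  rw [Subalgebra.algebraMap_eq]
  exact Subtype.val_injective.comp (fun a b h => h)

theorem IntermediateField.algebraMap_val_injective {K : Type*} [Field K] [Algebra K E]
    (N : IntermediateField K E) : Function.Injective (algebraMap ↥N E) :=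
  RingHom.injective _

@[simp]
theorem Subfield.range_algebraMap_val (N : Subfield E) :
    Set.range (algebraMap ↥N E) = (N : Set E) := by
  ext y
  constructor
  · rintro ⟨z, rfl⟩; exact z.2
  · intro hy; exact ⟨⟨y, hy⟩, rfl⟩

end Transfer

section Exchange
variable {E : Type*} [Field E]

theorem aeval_mem_algAdjoin {K : Type*} [CommRing K] [Algebra K E] {S : Set E}
    (r : MvPolynomial S K) :
    (MvPolynomial.aeval (Subtype.val : S → E)) r ∈ Algebra.adjoin K S := by
  have h : Algebra.adjoin K (Set.range (Subtype.val : S → E)) =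
      (MvPolynomial.aeval (Subtype.val : S → E)).range :=
    Algebra.adjoin_range_eq_range_aeval K _
  rw [Subtype.range_coe] at h
  rw [h]
  exact ⟨r, rfl⟩

/-- Clearing denominators: algebraic over the field adjoin implies algebraic over
the ring adjoin. -/
theorem isAlgebraic_algAdjoin_of_adjoin {K : Type*} [Field K] [Algebra K E] {S : Set E} {x : E}
    (h : IsAlgebraic ↥(IntermediateField.adjoin K S) x) :
    IsAlgebraic ↥(Algebra.adjoin K S) x := by
  classical
  obtain ⟨Q, hQ0, hmem, hev⟩ :=
    exists_polyE_of_isAlgebraic (IntermediateField.algebraMap_val_injective _) h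
  simp only [IntermediateField.range_algebraMap_val, SetLike.mem_coe,
    IntermediateField.mem_adjoin_iff] at hmem
  have key : ∀ i ∈ Q.support, ∃ r s : E, r ∈ Algebra.adjoin K S ∧ s ∈ Algebra.adjoin K S ∧
      s ≠ 0 ∧ Q.coeff i = r / s := by
    intro i hi
    obtain ⟨r, s, hrs⟩ := hmem i
    have hco : Q.coeff i ≠ 0 := Polynomial.mem_support_iff.1 hi
    have hsne : (MvPolynomial.aeval (Subtype.val : S → E)) s ≠ 0 := by
      intro h0
      rw [h0, div_zero] at hrs
      exact hco hrs
    exact ⟨_, _, aeval_mem_algAdjoin r, aeval_mem_algAdjoin s, hsne, hrs⟩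
  choose! r s hr hs hsne hco using key
  set d : E := ∏ i ∈ Q.support, s i with hd
  have hdne : d ≠ 0 := Finset.prod_ne_zero_iff.2 fun i hi => hsne i hi
  have hdadj : d ∈ Algebra.adjoin K S := Subalgebra.prod_mem _ fun i hi => hs i hi
  set Q' : E[X] := Polynomial.C d * Q with hQ'
  have hQ'0 : Q' ≠ 0 := mul_ne_zero (by simpa using hdne) hQ0
  have hQ'ev : Polynomial.eval x Q' = 0 := by
    rw [hQ', Polynomial.eval_mul, hev, mul_zero]
  have hQ'mem : ∀ i, Q'.coeff i ∈ Algebra.adjoin K S := by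
    intro i
    rw [hQ', Polynomial.coeff_C_mul]
    by_cases hi : i ∈ Q.support
    · have : d * Q.coeff i = (∏ j ∈ Q.support.erase i, s j) * r i := by
        rw [hco i hi, hd, ← Finset.mul_prod_erase _ _ hi, ← mul_div_assoc,
          div_eq_iff (hsne i hi)]
        ring
      rw [this]
      exact Subalgebra.mul_mem _ (Subalgebra.prod_mem _ fun j hj =>
        hs j (Finset.mem_of_mem_erase hj)) (hr i hi)
    · rw [Polynomial.notMem_support_iff.1 hi, mul_zero]
      exact Subalgebra.zero_mem _
  refine isAlgebraic_of_polyE Q' hQ'0 (fun i => ?_) hQ'ev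
  rw [Subalgebra.range_algebraMap_val']
  exact hQ'mem i

/-- The converse bridge direction. -/
theorem isAlgebraic_adjoin_of_algAdjoin {K : Type*} [Field K] [Algebra K E] {S : Set E} {x : E}
    (h : IsAlgebraic ↥(Algebra.adjoin K S) x) :
    IsAlgebraic ↥(IntermediateField.adjoin K S) x := by
  refine h.transfer (Subalgebra.algebraMap_val_injective _) ?_
  rw [Subalgebra.range_algebraMap_val', IntermediateField.range_algebraMap_val]
  exact IntermediateField.algebra_adjoin_le_adjoin K S

/-- Transitivity: if `b` is algebraic over `K` and `c` is algebraic over `K(b)`,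
then `c` is algebraic over `K`. -/
theorem isAlgebraic_trans_adjoin_simple {K : Type*} [Field K] [Algebra K E] {b c : E}
    (hb : IsAlgebraic K b) (hc : IsAlgebraic ↥(IntermediateField.adjoin K {b}) c) :
    IsAlgebraic K c := by
  haveI : Algebra.IsAlgebraic K ↥(IntermediateField.adjoin K {b}) :=
    IntermediateField.isAlgebraic_adjoin_simple hb.isIntegral
  haveI : Algebra.IsIntegral K ↥(IntermediateField.adjoin K {b}) :=
    Algebra.IsAlgebraic.isIntegral
  have := isIntegral_trans (R := K) (A := ↥(IntermediateField.adjoin K {b})) c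
    ((isAlgebraic_iff_isIntegral).1 hc)
  exact this.isAlgebraic

end Exchange

section Exchange2
variable {E : Type*} [Field E]

theorem isAlgebraic_adjoin_mono {K : Type*} [Field K] [Algebra K E] {S T : Set E} (h : S ⊆ T)
    {x : E} (hx : IsAlgebraic ↥(IntermediateField.adjoin K S) x) :
    IsAlgebraic ↥(IntermediateField.adjoin K T) x := by
  refine hx.transfer (IntermediateField.algebraMap_val_injective _) ?_
  rw [IntermediateField.range_algebraMap_val, IntermediateField.range_algebraMap_val]
  exact IntermediateField.adjoin.mono _ _ _ h

theorem coe_adjoin_adjoin {K : Type*} [Field K] [Algebra K E] (S T : Set E) :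
    ((IntermediateField.adjoin ↥(IntermediateField.adjoin K S) T) : Set E) =
      ↑(IntermediateField.adjoin K (S ∪ T)) := by
  rw [← IntermediateField.adjoin_adjoin_left]
  rfl

theorem isAlgebraic_adjoin_adjoin_iff {K : Type*} [Field K] [Algebra K E] {S T : Set E} {x : E} :
    IsAlgebraic ↥(IntermediateField.adjoin ↥(IntermediateField.adjoin K S) T) x ↔
      IsAlgebraic ↥(IntermediateField.adjoin K (S ∪ T)) x := by
  constructor <;> intro h
  · refine h.transfer (IntermediateField.algebraMap_val_injective _) ?_
    rw [IntermediateField.range_algebraMap_val, IntermediateField.range_algebraMap_val,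
      coe_adjoin_adjoin]
  · refine h.transfer (IntermediateField.algebraMap_val_injective _) ?_
    rw [IntermediateField.range_algebraMap_val, IntermediateField.range_algebraMap_val,
      coe_adjoin_adjoin]

/-- The key exchange lemma for a pair of elements. -/
theorem pair_exchange {K : Type*} [Field K] [Algebra K E] {a b : E}
    (ha : Transcendental K a) (hb : Transcendental K b)
    (hab : IsAlgebraic ↥(IntermediateField.adjoin K {b}) a) :
    IsAlgebraic ↥(IntermediateField.adjoin K {a}) b := by
  have hbindep : AlgebraicIndependent K (fun _ : Unit => b) :=
    algebraicIndependent_unique_type_iff.2 hb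
  have haindep : AlgebraicIndependent K (fun _ : Unit => a) :=
    algebraicIndependent_unique_type_iff.2 ha
  have hpair : ¬ AlgebraicIndependent K (fun o : Option Unit => o.elim a (fun _ => b)) := by
    intro hp
    have h2 := (hbindep.option_iff_transcendental a).1 hp
    rw [Set.range_const] at h2
    exact h2 (isAlgebraic_algAdjoin_of_adjoin hab)
  have hswap : ¬ AlgebraicIndependent K (fun o : Option Unit => o.elim b (fun _ => a)) := by
    intro hp
    apply hpair
    have h3 := hp.comp (Equiv.swap none (some ())) (Equiv.injective _)
    have h4 : ((fun o : Option Unit => o.elim b (fun _ => a)) ∘ (Equiv.swap none (some ()))) =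
        (fun o : Option Unit => o.elim a (fun _ => b)) := by
      funext o
      match o with
      | none => simp [Equiv.swap_apply_left]
      | some () => simp [Equiv.swap_apply_right]
    rwa [h4] at h3
  have h5 : ¬ Transcendental ↥(Algebra.adjoin K (Set.range (fun _ : Unit => a))) b :=
    fun h => hswap ((haindep.option_iff_transcendental b).2 h)
  rw [Set.range_const] at h5
  exact isAlgebraic_adjoin_of_algAdjoin (not_not.1 h5)

/-- Members of an algebraically independent set are transcendental over the field
generated by any subset not containing them. -/
theorem indep_transcendental {K : Type*} [Field K] [Algebra K E] {s : Set E}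
    (hs : AlgebraicIndependent K ((↑) : s → E)) {u : Set E} (hu : u ⊆ s) {a : E}
    (ha : a ∈ s) (hau : a ∉ u) : Transcendental ↥(IntermediateField.adjoin K u) a := by
  intro halg
  have h1 : IsAlgebraic ↥(Algebra.adjoin K u) a := isAlgebraic_algAdjoin_of_adjoin halg
  have hui : AlgebraicIndependent K ((↑) : u → E) := hs.mono hu
  have hopt : AlgebraicIndependent K (fun o : Option u => o.elim a Subtype.val) := by
    have hins := hs.mono (t := insert a u) (Set.insert_subset ha hu)
    let g : Option u → {z : E // z ∈ insert a u} := fun o =>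
      Option.elim o ⟨a, Set.mem_insert _ _⟩ (fun x => ⟨x.1, Set.mem_insert_of_mem _ x.2⟩)
    have hginj : Function.Injective g := by
      intro o o' h
      have hval : (g o).1 = (g o').1 := congrArg Subtype.val h
      cases o with
      | none =>
        cases o' with
        | none => rfl
        | some x =>
          have hax : a = (x : E) := hval
          exact absurd (hau (by rw [hax]; exact x.2)) (by simp)
      | some x =>
        cases o' with
        | none =>
          have hax : (x : E) = a := hval
          exact absurd (hau (by rw [← hax]; exact x.2)) (by simp)
        | some x' => exact congrArg some (Subtype.ext hval)
    have hcomp := hins.comp g hginj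
    have heq : (Subtype.val : {z : E // z ∈ insert a u} → E) ∘ g =
        (fun o : Option u => o.elim a Subtype.val) := by
      funext o
      match o with
      | none => rfl
      | some x => rfl
    rwa [heq] at hcomp
  have h6 := (hui.option_iff_transcendental a).1 hopt
  rw [Subtype.range_coe] at h6
  exact h6 h1

end Exchange2

section LemB
variable {E : Type*} [Field E]

theorem steinitz_finset {K : Type*} [Field K] [Algebra K E] :
    ∀ (n : ℕ) (w y s : Finset E),
    y.card ≤ n →
    AlgebraicIndependent K ((↑) : ((w : Set E) ∪ (s : Set E) : Set E) → E) →
    Disjoint (w : Set E) (s : Set E) →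
    (∀ a ∈ s, IsAlgebraic ↥(IntermediateField.adjoin K ((w : Set E) ∪ (y : Set E))) a) →
    s.card ≤ y.card := by
  intro n
  induction n with
  | zero =>
    intro w y s hy hind hdisj halg
    have hyempty : y = ∅ := Finset.card_eq_zero.1 (Nat.le_zero.mp hy)
    subst hyempty
    rcases Finset.eq_empty_or_nonempty s with rfl | ⟨a, ha⟩
    · simp
    · exfalso
      have hanw : a ∉ (w : Set E) := fun hw => Set.disjoint_left.1 hdisj hw (by simpa using ha)
      have htr : Transcendental ↥(IntermediateField.adjoin K (w : Set E)) a :=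
        indep_transcendental hind Set.subset_union_left
          (Set.mem_union_right _ (by simpa using ha)) hanw
      have := halg a ha
      rw [Finset.coe_empty, Set.union_empty] at this
      exact htr this
  | succ n ih =>
    intro w y s hy hind hdisj halg
    classical
    rcases Finset.eq_empty_or_nonempty s with rfl | ⟨a, ha⟩
    · simp
    have hanw : a ∉ (w : Set E) := fun hw => Set.disjoint_left.1 hdisj hw (by simpa using ha)
    have hamem : a ∈ ((w : Set E) ∪ (s : Set E)) := Set.mem_union_right _ (by simpa using ha)
    -- choose a minimal subset T of y such that a is algebraic over K(w ∪ T)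
    let P : Finset E → Prop := fun T =>
      IsAlgebraic ↥(IntermediateField.adjoin K ((w : Set E) ∪ (T : Set E))) a
    have hyP : y ∈ y.powerset.filter (fun T => P T) := by
      rw [Finset.mem_filter]
      exact ⟨Finset.mem_powerset_self y, halg a ha⟩
    obtain ⟨T, hT, hTmin⟩ := Finset.exists_min_image (y.powerset.filter (fun T => P T))
      Finset.card ⟨y, hyP⟩
    rw [Finset.mem_filter, Finset.mem_powerset] at hT
    obtain ⟨hTsub, hTalg⟩ := hT
    -- T is nonempty
    have hTne : T.Nonempty := by
      rcases Finset.eq_empty_or_nonempty T with rfl | h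
      · exfalso
        have htr : Transcendental ↥(IntermediateField.adjoin K (w : Set E)) a :=
          indep_transcendental hind Set.subset_union_left hamem hanw
        have h0 : IsAlgebraic
            ↥(IntermediateField.adjoin K ((w : Set E) ∪ (((∅ : Finset E)) : Set E))) a := hTalg
        rw [Finset.coe_empty, Set.union_empty] at h0
        exact htr h0
      · exact h
    obtain ⟨b, hb⟩ := hTne
    have hby : b ∈ y := hTsub hb
    set S₁ : Set E := (w : Set E) ∪ ((T.erase b : Finset E) : Set E) with hS₁
    -- a is transcendental over K(w ∪ (T \ {b})) by minimality
    have htransa : Transcendental ↥(IntermediateField.adjoin K S₁) a := by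
      intro halg'
      have hmem : T.erase b ∈ y.powerset.filter (fun T => P T) := by
        rw [Finset.mem_filter, Finset.mem_powerset]
        exact ⟨(Finset.erase_subset _ _).trans hTsub, halg'⟩
      have := hTmin _ hmem
      have hlt : (T.erase b).card < T.card := Finset.card_erase_lt_of_mem hb
      omega
    -- a is algebraic over (K(w ∪ T \ {b}))(b)
    have hab : IsAlgebraic
        ↥(IntermediateField.adjoin ↥(IntermediateField.adjoin K S₁) {b}) a := by
      rw [isAlgebraic_adjoin_adjoin_iff]
      have hset : S₁ ∪ {b} = (w : Set E) ∪ (T : Set E) := by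
        rw [hS₁, Set.union_assoc]
        congr 1
        ext z
        simp only [Set.mem_union, Finset.coe_erase, Set.mem_diff, Set.mem_singleton_iff,
          Finset.mem_coe]
        constructor
        · rintro (⟨hz, _⟩ | rfl)
          · exact hz
          · exact hb
        · intro hz
          by_cases hzb : z = b
          · exact Or.inr hzb
          · exact Or.inl ⟨hz, hzb⟩
      rw [hset]
      exact hTalg
    have hbtrans : Transcendental ↥(IntermediateField.adjoin K S₁) b := by
      intro hbalg
      exact htransa (isAlgebraic_trans_adjoin_simple hbalg hab)
    have hba := pair_exchange htransa hbtrans hab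
    -- b is algebraic over K((w ∪ {a}) ∪ (y \ {b}))
    have hba' : IsAlgebraic
        ↥(IntermediateField.adjoin K
          (((insert a w : Finset E) : Set E) ∪ ((y.erase b : Finset E) : Set E))) b := by
      have h1 : IsAlgebraic ↥(IntermediateField.adjoin K (S₁ ∪ {a})) b :=
        isAlgebraic_adjoin_adjoin_iff.1 hba
      refine isAlgebraic_adjoin_mono ?_ h1
      intro z hz
      rcases hz with (hz | hz) | hz
      · exact Or.inl (by rw [Finset.coe_insert]; exact Set.mem_insert_of_mem _ hz)
      · refine Or.inr ?_
        rw [Finset.coe_erase] at hz ⊢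
        exact ⟨Finset.coe_subset.2 hTsub hz.1, hz.2⟩
      · exact Or.inl (by rw [Finset.coe_insert]; rcases hz with rfl; exact Set.mem_insert _ _)
    -- recursive step
    have hsets : (((insert a w : Finset E) : Set E) ∪ ((s.erase a : Finset E) : Set E))
        = (w : Set E) ∪ (s : Set E) := by
      rw [Finset.coe_insert, Finset.coe_erase]
      ext z
      simp only [Set.mem_union, Set.mem_insert_iff, Set.mem_diff, Set.mem_singleton_iff]
      constructor
      · rintro ((rfl | hz) | ⟨hz, _⟩)
        · exact Or.inr (by simpa using ha)
        · exact Or.inl hz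
        · exact Or.inr hz
      · rintro (hz | hz)
        · exact Or.inl (Or.inr hz)
        · by_cases hza : z = a
          · exact Or.inl (Or.inl hza)
          · exact Or.inr ⟨hz, hza⟩
    have hind' : AlgebraicIndependent K
        ((↑) : (((insert a w : Finset E) : Set E) ∪ ((s.erase a : Finset E) : Set E) : Set E)
          → E) := by
      rw [hsets]; exact hind
    have hdisj' : Disjoint ((insert a w : Finset E) : Set E) ((s.erase a : Finset E) : Set E) := by
      rw [Finset.coe_insert, Finset.coe_erase]
      rw [Set.disjoint_left]
      rintro z (rfl | hz)
      · simp
      · intro hzs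
        exact Set.disjoint_left.1 hdisj hz hzs.1
    have halg' : ∀ c ∈ s.erase a, IsAlgebraic
        ↥(IntermediateField.adjoin K
          (((insert a w : Finset E) : Set E) ∪ ((y.erase b : Finset E) : Set E))) c := by
      intro c hc
      set U : Set E := ((insert a w : Finset E) : Set E) ∪ ((y.erase b : Finset E) : Set E)
        with hU
      have hcalg : IsAlgebraic ↥(IntermediateField.adjoin K (U ∪ {b})) c := by
        refine isAlgebraic_adjoin_mono ?_ (halg c (Finset.mem_of_mem_erase hc))
        intro z hz
        rcases hz with hz | hz
        · exact Or.inl (Or.inl (by rw [Finset.coe_insert]; exact Set.mem_insert_of_mem _ hz))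
        · by_cases hzb : z = b
          · exact Or.inr (by simpa using hzb)
          · refine Or.inl (Or.inr ?_)
            rw [Finset.coe_erase]
            exact ⟨hz, hzb⟩
      have hc2 : IsAlgebraic
          ↥(IntermediateField.adjoin ↥(IntermediateField.adjoin K U) {b}) c := by
        rw [isAlgebraic_adjoin_adjoin_iff]
        exact hcalg
      exact isAlgebraic_trans_adjoin_simple hba' hc2
    have hrec := ih (insert a w) (y.erase b) (s.erase a)
      (by rw [Finset.card_erase_of_mem hby]; omega) hind' hdisj' halg'
    have h1 : s.card = (s.erase a).card + 1 := by
      rw [Finset.card_erase_of_mem ha]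
      have : 1 ≤ s.card := Finset.card_pos.2 ⟨a, ha⟩
      omega
    have h2 : y.card = (y.erase b).card + 1 := by
      rw [Finset.card_erase_of_mem hby]
      have : 1 ≤ y.card := Finset.card_pos.2 ⟨b, hby⟩
      omega
    omega

end LemB

section Compare
open Cardinal
variable {E : Type*} [Field E]

theorem card_le_of_algebraic_finset {K : Type*} [Field K] [Algebra K E] {u : Set E}
    (t : Finset E) (hu : AlgebraicIndependent K ((↑) : u → E))
    (halg : ∀ a ∈ u, IsAlgebraic ↥(IntermediateField.adjoin K (t : Set E)) a) :
    Cardinal.mk u ≤ (t.card : Cardinal) := by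
  classical
  have hbound : ∀ s : Finset E, (s : Set E) ⊆ u → s.card ≤ t.card := by
    intro s hsu
    have hset : (((∅ : Finset E) : Set E) ∪ (s : Set E)) = (s : Set E) := by simp
    have hset2 : (((∅ : Finset E) : Set E) ∪ (t : Set E)) = (t : Set E) := by simp
    refine steinitz_finset (K := K) t.card ∅ t s le_rfl ?_ (by simp) ?_
    · rw [hset]; exact hu.mono hsu
    · intro a haa
      rw [hset2]
      exact halg a (hsu haa)
  have hufin : u.Finite := by
    by_contra hinf
    obtain ⟨s, hsu, hscard⟩ := Set.Infinite.exists_subset_card_eq hinf (t.card + 1)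
    have := hbound s hsu
    omega
  have h1 : #u = (hufin.toFinset.card : Cardinal) := by
    rw [← Cardinal.mk_coe_finset]
    exact Cardinal.mk_congr (Equiv.setCongr (Set.Finite.coe_toFinset hufin).symm)
  rw [h1]
  exact_mod_cast hbound hufin.toFinset (by simp)

theorem exists_finset_isAlgebraic_adjoin {K : Type*} [Field K] [Algebra K E] {t : Set E} {a : E}
    (h : IsAlgebraic ↥(IntermediateField.adjoin K t) a) :
    ∃ F : Finset E, (F : Set E) ⊆ t ∧ IsAlgebraic ↥(IntermediateField.adjoin K (F : Set E)) a := by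
  classical
  obtain ⟨Q, hQ0, hmem, hev⟩ :=
    exists_polyE_of_isAlgebraic (IntermediateField.algebraMap_val_injective _) h
  simp only [IntermediateField.range_algebraMap_val, SetLike.mem_coe] at hmem
  have key : ∀ i : ℕ, ∃ F : Finset E, (F : Set E) ⊆ t ∧
      Q.coeff i ∈ IntermediateField.adjoin K (F : Set E) := by
    intro i
    obtain ⟨F, hF1, hF2⟩ := IntermediateField.exists_finset_of_mem_adjoin (hmem i)
    exact ⟨F, hF1, hF2⟩
  choose F hF1 hF2 using key
  refine ⟨Q.support.biUnion F, ?_, ?_⟩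
  · intro z hz
    rw [Finset.coe_biUnion] at hz
    simp only [Set.mem_iUnion] at hz
    obtain ⟨i, _, hzi⟩ := hz
    exact hF1 i hzi
  · refine isAlgebraic_of_polyE Q hQ0 (fun i => ?_) hev
    rw [IntermediateField.range_algebraMap_val]
    by_cases hi : i ∈ Q.support
    · refine IntermediateField.adjoin.mono _ _ _ ?_ (hF2 i)
      intro z hz
      rw [Finset.coe_biUnion]
      exact Set.mem_iUnion.2 ⟨i, Set.mem_iUnion.2 ⟨hi, hz⟩⟩
    · rw [Polynomial.notMem_support_iff.1 hi]
      exact zero_mem _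

theorem algIndep_card_le {K : Type*} [Field K] [Algebra K E] {u t : Set E}
    (hu : AlgebraicIndependent K ((↑) : u → E))
    (halg : ∀ a ∈ u, IsAlgebraic ↥(IntermediateField.adjoin K t) a) :
    Cardinal.mk u ≤ #t := by
  classical
  rcases t.finite_or_infinite with ht | ht
  · have hcoe : (ht.toFinset : Set E) = t := ht.coe_toFinset
    have h1 : #u ≤ (ht.toFinset.card : Cardinal) := by
      refine card_le_of_algebraic_finset ht.toFinset hu ?_
      intro a ha
      rw [hcoe]
      exact halg a ha
    have h2 : #t = (ht.toFinset.card : Cardinal) := by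
      rw [← Cardinal.mk_coe_finset]
      exact Cardinal.mk_congr (Equiv.setCongr hcoe.symm)
    rw [h2]; exact h1
  · -- infinite case
    have hchoice : ∀ a : u, ∃ F : Finset E, (F : Set E) ⊆ t ∧
        IsAlgebraic ↥(IntermediateField.adjoin K (F : Set E)) (a : E) :=
      fun a => exists_finset_isAlgebraic_adjoin (halg a a.2)
    choose F hF1 hF2 using hchoice
    let φ : u → Finset ↥t := fun a => (F a).subtype (· ∈ t)
    have hφval : ∀ a : u, Finset.image Subtype.val (φ a) = F a := by
      intro a
      ext z
      simp only [φ, Finset.mem_image, Finset.mem_subtype]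
      constructor
      · rintro ⟨⟨z', hz'⟩, hz1, rfl⟩; exact hz1
      · intro hz; exact ⟨⟨z, hF1 a hz⟩, hz, rfl⟩
    -- each fiber is small
    have hfiber : ∀ G : Finset ↥t, #{a : u // φ a = G} ≤ ℵ₀ := by
      intro G
      set G' : Finset E := Finset.image Subtype.val G with hG'
      set U : Set E := {x : E | ∃ h : x ∈ u, φ ⟨x, h⟩ = G} with hU
      have hfin : #U ≤ (G'.card : Cardinal) := by
        refine card_le_of_algebraic_finset G' (hu.mono ?_) ?_
        · rintro x ⟨h, _⟩; exact h
        · rintro x ⟨h, hxG⟩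
          have hFx : F ⟨x, h⟩ = G' := by
            rw [hG', ← hxG, hφval]
          have := hF2 ⟨x, h⟩
          rwa [hFx] at this
      have hinj : Function.Injective (fun z : {a : u // φ a = G} => (⟨z.1.1, z.1.2, z.2⟩ : U)) := by
        rintro ⟨⟨z1, hz1⟩, hz1'⟩ ⟨⟨z2, hz2⟩, hz2'⟩ hzz
        have : z1 = z2 := congrArg Subtype.val hzz
        subst this
        rfl
      calc #{a : u // φ a = G} ≤ #U := Cardinal.mk_le_of_injective hinj
        _ ≤ (G'.card : Cardinal) := hfin
        _ ≤ ℵ₀ := (Cardinal.nat_lt_aleph0 _).le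
    haveI : Infinite ↥t := Set.infinite_coe_iff.2 ht
    calc #u = Cardinal.sum (fun G : Finset ↥t => #{a : u // φ a = G}) := by
          rw [← Cardinal.mk_sigma]
          exact Cardinal.mk_congr (Equiv.sigmaFiberEquiv φ).symm
      _ ≤ Cardinal.sum (fun _ : Finset ↥t => ℵ₀) := Cardinal.sum_le_sum _ _ hfiber
      _ = #(Finset ↥t) * ℵ₀ := Cardinal.sum_const' _ _
      _ = #t * ℵ₀ := by rw [Cardinal.mk_finset_of_infinite]
      _ = #t := by
          exact Cardinal.mul_eq_left (Cardinal.aleph0_le_mk ↥t) (Cardinal.aleph0_le_mk ↥t)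
            Cardinal.aleph0_ne_zero

/-- Any algebraically independent set has cardinality at most that of any
transcendence basis. -/
theorem algIndep_card_le_basis {F : Type*} [Field F] [Algebra F E] {u t : Set E}
    (hu : AlgebraicIndependent F ((↑) : u → E))
    (ht : IsTranscendenceBasis F ((↑) : t → E)) : #u ≤ #t := by
  refine algIndep_card_le hu (fun a _ => ?_)
  have halg := ht.isAlgebraic
  rw [Subtype.range_coe] at halg
  have h2 : IsAlgebraic ↥(Algebra.adjoin F t) a := halg.isAlgebraic a
  exact isAlgebraic_adjoin_of_algAdjoin h2

end Compare

section Lift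
open MvPolynomial

theorem lifted_algebraicIndependent
    {L : Type*} [Field L] (v : Valuation L (WithZero (Multiplicative ℤ)))
    (K : Subfield L)
    (i : IsLocalRing.ResidueField (v.comap K.subtype).valuationSubring →+*
         IsLocalRing.ResidueField v.valuationSubring)
    (hi : ∀ (x : (v.comap K.subtype).valuationSubring) (y : v.valuationSubring),
      ((x : K) : L) = (y : L) →
        i (IsLocalRing.residue _ x) = IsLocalRing.residue _ y)
    (s : Set (IsLocalRing.ResidueField v.valuationSubring))
    (hs : letI := i.toAlgebra
      AlgebraicIndependent (IsLocalRing.ResidueField (v.comap K.subtype).valuationSubring)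
        ((↑) : s → IsLocalRing.ResidueField v.valuationSubring))
    (a : s → v.valuationSubring)
    (ha : ∀ x : s, IsLocalRing.residue _ (a x) = (x : IsLocalRing.ResidueField _)) :
    AlgebraicIndependent ↥K (fun x : s => ((a x : L))) := by
  classical
  letI := i.toAlgebra
  -- the natural ring hom between the valuation subrings
  have hmemg : ∀ x : (v.comap K.subtype).valuationSubring, ((x : ↥K) : L) ∈ v.valuationSubring := by
    intro x
    rw [Valuation.mem_valuationSubring_iff]
    have h2 := x.2
    rw [Valuation.mem_valuationSubring_iff, Valuation.comap_apply] at h2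
    exact h2
  let g : ↥(v.comap K.subtype).valuationSubring →+* ↥v.valuationSubring :=
    { toFun := fun x => ⟨((x : ↥K) : L), hmemg x⟩
      map_one' := by ext; simp
      map_mul' := by intro x y; ext; simp
      map_zero' := by ext; simp
      map_add' := by intro x y; ext; simp }
  rw [algebraicIndependent_iff]
  intro p hp
  by_contra hp0
  have hsupp : p.support.Nonempty := Finset.nonempty_iff_ne_empty.2
    (fun h => hp0 (MvPolynomial.support_eq_empty.1 h))
  obtain ⟨m₀, hm₀, hmax⟩ := Finset.exists_max_image p.support
    (fun m => (v.comap K.subtype) (p.coeff m)) hsupp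
  have hc0 : p.coeff m₀ ≠ 0 := MvPolynomial.mem_support_iff.1 hm₀
  have hvc0 : (v.comap K.subtype) (p.coeff m₀) ≠ 0 :=
    (Valuation.ne_zero_iff (v.comap K.subtype)).2 hc0
  set q : MvPolynomial s ↥K := MvPolynomial.C (p.coeff m₀)⁻¹ * p with hq
  have hqev : MvPolynomial.aeval (fun x : s => ((a x : L))) q = 0 := by
    rw [hq, map_mul, hp, mul_zero]
  have hqcoeff : ∀ m, q.coeff m = (p.coeff m₀)⁻¹ * p.coeff m := by
    intro m; rw [hq, MvPolynomial.coeff_C_mul]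
  have hqle : ∀ m, (v.comap K.subtype) (q.coeff m) ≤ 1 := by
    intro m
    rw [hqcoeff]
    by_cases hm : m ∈ p.support
    · rw [map_mul, map_inv₀]
      calc ((v.comap K.subtype) (p.coeff m₀))⁻¹ * (v.comap K.subtype) (p.coeff m)
          ≤ ((v.comap K.subtype) (p.coeff m₀))⁻¹ * (v.comap K.subtype) (p.coeff m₀) :=
            mul_le_mul_right (hmax m hm) _
        _ = 1 := inv_mul_cancel₀ hvc0
    · rw [MvPolynomial.notMem_support_iff.1 hm, mul_zero, map_zero]
      exact zero_le_one
  have hqm₀ : q.coeff m₀ = 1 := by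
    rw [hqcoeff, inv_mul_cancel₀ hc0]
  -- lift q to the valuation subring of K
  let cQ : (s →₀ ℕ) → ↥(v.comap K.subtype).valuationSubring := fun m => ⟨q.coeff m, by
    rw [Valuation.mem_valuationSubring_iff]; exact hqle m⟩
  set Q : MvPolynomial s ↥(v.comap K.subtype).valuationSubring :=
    ∑ m ∈ q.support, MvPolynomial.monomial m (cQ m) with hQ
  have hQcoeff : ∀ m, Q.coeff m = if m ∈ q.support then cQ m else 0 := by
    intro m
    rw [hQ, MvPolynomial.coeff_sum]
    simp_rw [MvPolynomial.coeff_monomial]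
    exact Finset.sum_ite_eq' q.support m cQ
  have hQmap : MvPolynomial.map ((v.comap K.subtype).valuationSubring.subtype) Q = q := by
    apply MvPolynomial.ext
    intro m
    rw [MvPolynomial.coeff_map, hQcoeff]
    by_cases hm : m ∈ q.support
    · rw [if_pos hm]; rfl
    · rw [if_neg hm, map_zero, MvPolynomial.notMem_support_iff.1 hm]
  -- evaluate in the valuation subring of L
  set z : ↥v.valuationSubring := MvPolynomial.eval₂ g a Q with hz
  have hzval : (z : L) = MvPolynomial.aeval (fun x : s => ((a x : L))) q := by
    have h1 : (v.valuationSubring.subtype) z = MvPolynomial.eval₂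
        ((v.valuationSubring.subtype).comp g) (fun x => ((a x : L))) Q := by
      rw [hz]
      exact MvPolynomial.eval₂_comp_left (v.valuationSubring.subtype) g a Q
    have h2 : (v.valuationSubring.subtype).comp g
        = (K.subtype).comp ((v.comap K.subtype).valuationSubring.subtype) := by
      ext x; rfl
    rw [h2] at h1
    have h3 : MvPolynomial.eval₂ ((K.subtype).comp ((v.comap K.subtype).valuationSubring.subtype))
          (fun x : s => ((a x : L))) Q
        = MvPolynomial.eval₂ (K.subtype) (fun x : s => ((a x : L)))
          (MvPolynomial.map ((v.comap K.subtype).valuationSubring.subtype) Q) := by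
      rw [MvPolynomial.eval₂_map]
    have h4 : (v.valuationSubring.subtype) z = (z : L) := rfl
    rw [h4] at h1
    rw [h1, h3, hQmap]
    rfl
  have hz0 : z = 0 := by
    have hval0 : (z : L) = 0 := by rw [hzval, hqev]
    exact Subtype.ext hval0
  -- push to residue fields
  set P : MvPolynomial s (IsLocalRing.ResidueField ↥(v.comap K.subtype).valuationSubring) :=
    MvPolynomial.map (IsLocalRing.residue ↥(v.comap K.subtype).valuationSubring) Q with hP
  have hres : MvPolynomial.aeval
      ((↑) : s → IsLocalRing.ResidueField ↥v.valuationSubring) P = 0 := by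
    have h5 : (IsLocalRing.residue ↥v.valuationSubring) z
        = MvPolynomial.eval₂ ((IsLocalRing.residue ↥v.valuationSubring).comp g)
          (fun x => (IsLocalRing.residue ↥v.valuationSubring) (a x)) Q :=
      MvPolynomial.eval₂_comp_left _ g a Q
    have h6 : (IsLocalRing.residue ↥v.valuationSubring).comp g
        = i.comp (IsLocalRing.residue ↥(v.comap K.subtype).valuationSubring) := by
      ext x
      exact (hi x (g x) rfl).symm
    have h7 : (fun x : s => (IsLocalRing.residue ↥v.valuationSubring) (a x))
        = ((↑) : s → IsLocalRing.ResidueField ↥v.valuationSubring) := by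
      funext x; exact ha x
    rw [h6, h7] at h5
    rw [hz0, map_zero] at h5
    rw [MvPolynomial.aeval_def, RingHom.algebraMap_toAlgebra, hP, MvPolynomial.eval₂_map]
    exact h5.symm
  have hP0 : P = 0 := by
    rw [algebraicIndependent_iff] at hs
    exact hs P hres
  have hPm₀ : P.coeff m₀ = 1 := by
    rw [hP, MvPolynomial.coeff_map, hQcoeff]
    have hm₀q : m₀ ∈ q.support := by
      rw [MvPolynomial.mem_support_iff, hqm₀]
      exact one_ne_zero
    rw [if_pos hm₀q]
    have hcQ1 : cQ m₀ = 1 := Subtype.ext hqm₀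
    rw [hcQ1, map_one]
  rw [hP0, MvPolynomial.coeff_zero] at hPm₀
  exact one_ne_zero hPm₀.symm

end Lift



/-- If `ν` is a surjective discrete valuation on a field `L` and `K ⊆ L`
is a subfield with `ν(K*) = ℤ`, then the transcendence degree of the residue field
extension `l/k` is at most the transcendence degree of `L/K`. Transcendence degrees
are compared via (arbitrary) transcendence bases. -/
theorem stmt0 (L : Type*) [Field L]
    (v : Valuation L (WithZero (Multiplicative ℤ)))
    (hv : Function.Surjective v)
    (K : Subfield L)
    (hK : Function.Surjective (v.comap K.subtype))
    (i : IsLocalRing.ResidueField (v.comap K.subtype).valuationSubring →+*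
         IsLocalRing.ResidueField v.valuationSubring)
    (hi : ∀ (x : (v.comap K.subtype).valuationSubring) (y : v.valuationSubring),
      ((x : K) : L) = (y : L) →
        i (IsLocalRing.residue _ x) = IsLocalRing.residue _ y)
    (s : Set (IsLocalRing.ResidueField v.valuationSubring))
    (t : Set L)
    (hs : letI := i.toAlgebra
      IsTranscendenceBasis (IsLocalRing.ResidueField (v.comap K.subtype).valuationSubring)
        ((↑) : s → IsLocalRing.ResidueField v.valuationSubring))
    (ht : IsTranscendenceBasis K ((↑) : t → L)) :
    Cardinal.mk s ≤ Cardinal.mk t := by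
  classical
  have hlift : ∀ x : s, ∃ y : v.valuationSubring,
      IsLocalRing.residue _ y = (x : IsLocalRing.ResidueField _) :=
    fun x => IsLocalRing.residue_surjective _
  choose a ha using hlift
  have hindep : AlgebraicIndependent ↥K (fun x : s => ((a x : L))) :=
    lifted_algebraicIndependent v K i hi s hs.1 a ha
  have hinj : Function.Injective (fun x : s => ((a x : L))) := hindep.injective
  have hrange : AlgebraicIndependent ↥K
      ((↑) : Set.range (fun x : s => ((a x : L))) → L) := hindep.coe_range
  have hcomp := algIndep_card_le_basis hrange ht
  calc Cardinal.mk s = Cardinal.mk (Set.range (fun x : s => ((a x : L)))) :=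
        (Cardinal.mk_range_eq _ hinj).symm
    _ ≤ Cardinal.mk t := hcomp
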